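/- Let H be a complex Hilbert space and B(H) = L(H,H) the bounded linear operators on H. Let (z_k) be a sequence in B(H) with ‖z_k‖ < 1 for all k, converging in norm to ξ ∈ B(H) with ‖ξ‖ ≤ 1. For ‖x‖ < 1 and ‖z‖ < 1 in B(H), let Φ(x,z) denote the bounded linear map on B(H) given by w ↦ (1 − x x*)^{-1/2} (1 − x z*) (1 − z z*)^{-1/2} · w · (1 − z* z)^{-1/2} (1 − z* x) (1 − x* x)^{-1/2}. If (x_k) is a sequence in the open unit ball of B(H) converging in norm to x with ‖x‖ < 1, then limsup_{k→∞} (1 − ‖z_k‖²) ‖Φ(x_k, z_k)‖ = limsup_{k→∞} (1 − ‖z_k‖²) ‖Φ(x, z_k)‖. -/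

import Mathlib

open Filter ContinuousLinearMap

set_option linter.unusedSectionVars false

section helpers
variable {A : Type*} [CStarAlgebra A] [PartialOrder A] [StarOrderedRing A]

lemma my_sqrt_eq_cfc_real (a : A) (ha : 0 ≤ a) : CFC.sqrt a = cfc Real.sqrt a := by
  refine CFC.sqrt_unique ?_ (cfc_nonneg fun t _ => Real.sqrt_nonneg t)
  rw [← cfc_mul _ _ a]
  calc cfc (fun t => Real.sqrt t * Real.sqrt t) a
      = cfc (id : ℝ → ℝ) a := by
        refine cfc_congr fun t ht => ?_
        exact Real.mul_self_sqrt (spectrum_nonneg_of_nonneg ha ht)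
    _ = a := cfc_id ℝ a

lemma my_nonneg_one_sub (z : A) (hz : ‖z‖ < 1) : (0:A) ≤ 1 - z * star z := by
  rw [sub_nonneg]
  calc z * star z ≤ algebraMap ℝ A (‖z‖ ^ 2) := CStarAlgebra.mul_star_le_algebraMap_norm_sq
    _ ≤ 1 := by
      rw [← map_one (algebraMap ℝ A), ← sub_nonneg, ← map_sub,
        Algebra.algebraMap_eq_smul_one]
      exact smul_nonneg (by nlinarith [norm_nonneg z]) zero_le_one

lemma my_spec_lower [Nontrivial A] (z : A) (hz : ‖z‖ < 1) :
    ∀ t ∈ spectrum ℝ (1 - z * star z), 1 - ‖z‖ ^ 2 ≤ t := by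
  intro t ht
  have h1 : (1 : A) = algebraMap ℝ A 1 := by simp
  rw [h1, ← spectrum.singleton_sub_eq] at ht
  obtain ⟨r, hr, s, hs, rfl⟩ := Set.mem_sub.mp ht
  rw [Set.mem_singleton_iff] at hr
  subst hr
  have hsle : s ≤ ‖z‖ ^ 2 := by
    have h4 := spectrum.norm_le_norm_of_mem hs
    have h2 : ‖z * star z‖ ≤ ‖z‖ ^ 2 := by
      calc ‖z * star z‖ ≤ ‖z‖ * ‖star z‖ := norm_mul_le _ _
        _ = ‖z‖ ^ 2 := by rw [norm_star]; ring
    calc s ≤ |s| := le_abs_self s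
      _ = ‖s‖ := rfl
      _ ≤ ‖z‖ ^ 2 := h4.trans h2
  linarith

lemma my_inv_sqrt (a : A) (c : ℝ) (hc : 0 < c) (ha : 0 ≤ a)
    (hspec : ∀ t ∈ spectrum ℝ a, c ≤ t) :
    IsUnit (CFC.sqrt a) ∧ ‖Ring.inverse (CFC.sqrt a)‖ ≤ (Real.sqrt c)⁻¹ := by
  have hsa : IsSelfAdjoint a := IsSelfAdjoint.of_nonneg ha
  have hne : ∀ t ∈ spectrum ℝ a, Real.sqrt t ≠ 0 := fun t ht =>
    ne_of_gt (Real.sqrt_pos.mpr (lt_of_lt_of_le hc (hspec t ht)))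
  have hgc : ContinuousOn (fun t => (Real.sqrt t)⁻¹) (spectrum ℝ a) :=
    Real.continuous_sqrt.continuousOn.inv₀ hne
  have hfc : ContinuousOn Real.sqrt (spectrum ℝ a) := Real.continuous_sqrt.continuousOn
  have hmul : cfc Real.sqrt a * cfc (fun t => (Real.sqrt t)⁻¹) a = 1 := by
    rw [← cfc_mul _ _ a hfc hgc]
    calc cfc (fun t => Real.sqrt t * (Real.sqrt t)⁻¹) a
        = cfc (fun _ : ℝ => (1:ℝ)) a := cfc_congr fun t ht => mul_inv_cancel₀ (hne t ht)
      _ = 1 := cfc_const_one ℝ a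
  have hmul' : cfc (fun t => (Real.sqrt t)⁻¹) a * cfc Real.sqrt a = 1 := by
    rw [← cfc_mul _ _ a hgc hfc]
    calc cfc (fun t => (Real.sqrt t)⁻¹ * Real.sqrt t) a
        = cfc (fun _ : ℝ => (1:ℝ)) a := cfc_congr fun t ht => inv_mul_cancel₀ (hne t ht)
      _ = 1 := cfc_const_one ℝ a
  set u : Aˣ := ⟨cfc Real.sqrt a, cfc (fun t => (Real.sqrt t)⁻¹) a, hmul, hmul'⟩ with hu
  have heq : CFC.sqrt a = cfc Real.sqrt a := my_sqrt_eq_cfc_real a ha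
  have hunit : IsUnit (CFC.sqrt a) := heq ▸ u.isUnit
  refine ⟨hunit, ?_⟩
  have hinv : Ring.inverse (CFC.sqrt a) = cfc (fun t => (Real.sqrt t)⁻¹) a := by
    rw [heq]
    exact Ring.inverse_unit u
  rw [hinv]
  refine norm_cfc_le (by positivity) fun t ht => ?_
  rw [Real.norm_eq_abs, abs_of_nonneg (by positivity)]
  exact inv_anti₀ (Real.sqrt_pos.mpr hc) (Real.sqrt_le_sqrt (hspec t ht))

lemma my_sqrt_near [Nontrivial A] {M ε : ℝ} (hε : 0 < ε) (p : Polynomial ℝ)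
    (hp : ∀ t ∈ Set.Icc (0:ℝ) M, |Polynomial.eval t p - Real.sqrt t| < ε)
    (a : A) (ha : 0 ≤ a) (hM : ‖a‖ ≤ M) :
    ‖CFC.sqrt a - Polynomial.aeval a p‖ ≤ ε := by
  have hsa : IsSelfAdjoint a := IsSelfAdjoint.of_nonneg ha
  have hsub : spectrum ℝ a ⊆ Set.Icc 0 M := fun t ht =>
    ⟨spectrum_nonneg_of_nonneg ha ht,
      le_trans (le_trans (le_abs_self t) (spectrum.norm_le_norm_of_mem ht)) hM⟩
  rw [my_sqrt_eq_cfc_real a ha, ← cfc_polynomial p a hsa,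
    ← cfc_sub Real.sqrt (fun t => Polynomial.eval t p) a
      Real.continuous_sqrt.continuousOn p.continuous.continuousOn]
  refine norm_cfc_le hε.le fun t ht => ?_
  rw [Real.norm_eq_abs, abs_sub_comm]
  exact (hp t (hsub ht)).le

lemma my_tendsto_sqrt [Nontrivial A] (b : ℕ → A) (b' : A) (hb : ∀ k, 0 ≤ b k) (hb' : 0 ≤ b')
    (h : Tendsto b atTop (nhds b')) :
    Tendsto (fun k => CFC.sqrt (b k)) atTop (nhds (CFC.sqrt b')) := by
  obtain ⟨M₀, hM₀⟩ : BddAbove (Set.range fun k => ‖b k‖) :=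
    (h.norm.bddAbove_range)
  set M : ℝ := max M₀ ‖b'‖ with hM
  have hMb : ∀ k, ‖b k‖ ≤ M := fun k =>
    le_max_of_le_left (hM₀ (Set.mem_range_self k))
  have hMb' : ‖b'‖ ≤ M := le_max_right _ _
  rw [Metric.tendsto_atTop]
  intro ε hε
  obtain ⟨p, hp⟩ := exists_polynomial_near_of_continuousOn 0 M Real.sqrt
    Real.continuous_sqrt.continuousOn (ε/4) (by linarith)
  have hpoly : Tendsto (fun k => Polynomial.aeval (b k) p) atTop
      (nhds (Polynomial.aeval b' p)) :=
    ((Polynomial.continuous_aeval p).continuousAt.tendsto).comp h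
  rw [Metric.tendsto_atTop] at hpoly
  obtain ⟨N, hN⟩ := hpoly (ε/4) (by linarith)
  refine ⟨N, fun k hk => ?_⟩
  rw [dist_eq_norm]
  calc ‖CFC.sqrt (b k) - CFC.sqrt b'‖
      ≤ ‖CFC.sqrt (b k) - Polynomial.aeval (b k) p‖
        + ‖Polynomial.aeval (b k) p - Polynomial.aeval b' p‖
        + ‖Polynomial.aeval b' p - CFC.sqrt b'‖ := by
        have := norm_add₃_le (a := CFC.sqrt (b k) - Polynomial.aeval (b k) p)
          (b := Polynomial.aeval (b k) p - Polynomial.aeval b' p)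
          (c := Polynomial.aeval b' p - CFC.sqrt b')
        simpa using this
    _ < ε := by
        have h1 := my_sqrt_near (by linarith : (0:ℝ) < ε/4) p hp (b k) (hb k) (hMb k)
        have h2 := hN k hk
        rw [dist_eq_norm] at h2
        have h3 := my_sqrt_near (by linarith : (0:ℝ) < ε/4) p hp b' hb' hMb'
        rw [norm_sub_rev] at h3
        linarith [h3]

lemma my_pos_c {z : A} (hz : ‖z‖ < 1) : 0 < 1 - ‖z‖ ^ 2 := by nlinarith [norm_nonneg z]

lemma my_bound [Nontrivial A] (z : A) (hz : ‖z‖ < 1) :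
    ‖Ring.inverse (CFC.sqrt (1 - z * star z))‖ ≤ (Real.sqrt (1 - ‖z‖ ^ 2))⁻¹ :=
  (my_inv_sqrt _ _ (my_pos_c hz) (my_nonneg_one_sub z hz) (my_spec_lower z hz)).2

lemma my_bound' [Nontrivial A] (z : A) (hz : ‖z‖ < 1) :
    ‖Ring.inverse (CFC.sqrt (1 - star z * z))‖ ≤ (Real.sqrt (1 - ‖z‖ ^ 2))⁻¹ := by
  have := my_bound (star z) (by rwa [norm_star])
  rwa [star_star, norm_star] at this

lemma my_isUnit [Nontrivial A] (z : A) (hz : ‖z‖ < 1) :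
    IsUnit (CFC.sqrt (1 - z * star z)) :=
  (my_inv_sqrt _ _ (my_pos_c hz) (my_nonneg_one_sub z hz) (my_spec_lower z hz)).1

lemma my_norm_one_sub_mul [Nontrivial A] (a b : A) (ha : ‖a‖ ≤ 1) (hb : ‖b‖ ≤ 1) :
    ‖(1 : A) - a * b‖ ≤ 2 := by
  calc ‖(1:A) - a * b‖ ≤ ‖(1:A)‖ + ‖a * b‖ := norm_sub_le _ _
    _ ≤ 1 + ‖a‖ * ‖b‖ := by rw [norm_one]; exact add_le_add le_rfl (norm_mul_le a b)
    _ ≤ 2 := by nlinarith [norm_nonneg a, norm_nonneg b]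

end helpers

lemma my_limsup_le (f g : ℕ → ℝ) {C : ℝ}
    (hf0 : ∀ k, 0 ≤ f k) (hg0 : ∀ k, 0 ≤ g k) (hgC : ∀ k, g k ≤ C)
    (h : Tendsto (fun k => f k - g k) atTop (nhds 0)) :
    limsup f atTop ≤ limsup g atTop := by
  refine le_of_forall_pos_le_add fun ε hε => ?_
  have hev : ∀ᶠ k in atTop, f k ≤ g k + ε := by
    have := Metric.tendsto_atTop.mp h ε hε
    obtain ⟨N, hN⟩ := this
    refine eventually_atTop.mpr ⟨N, fun k hk => ?_⟩
    have := hN k hk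
    rw [Real.dist_eq, sub_zero] at this
    have := (abs_lt.mp this).2
    linarith
  have hcob : IsCoboundedUnder (· ≤ ·) atTop f :=
    (isBoundedUnder_of ⟨0, fun k => hf0 k⟩ : IsBoundedUnder (· ≥ ·) atTop f).isCoboundedUnder_flip
  have hbdd : IsBoundedUnder (· ≤ ·) atTop fun k => g k + ε :=
    isBoundedUnder_of ⟨C + ε, fun k => by linarith [hgC k]⟩
  calc limsup f atTop ≤ limsup (fun k => g k + ε) atTop := limsup_le_limsup hev hcob hbdd
    _ = limsup g atTop + ε := by
      exact limsup_add_const atTop g ε (isBoundedUnder_of ⟨C, hgC⟩)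
        (isBoundedUnder_of ⟨0, hg0⟩ :
          IsBoundedUnder (· ≥ ·) atTop g).isCoboundedUnder_flip

lemma my_dec1 {A : Type*} [Ring A] (p u q p' u' : A) :
    p * u * q - p' * u' * q = ((p - p') * u + p' * (u - u')) * q := by noncomm_ring

lemma my_dec2 {A : Type*} [Ring A] (qt v pt v' pt' : A) :
    qt * v * pt - qt * v' * pt' = qt * (v * (pt - pt') + (v - v') * pt') := by noncomm_ring

lemma my_dec3 {A : Type*} [Ring A] (a a' b : A) :
    (1 - a * b) - (1 - a' * b) = (a' - a) * b := by noncomm_ring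

lemma my_dec4 {A : Type*} [Ring A] (b a a' : A) :
    (1 - b * a) - (1 - b * a') = b * (a' - a) := by noncomm_ring

lemma my_limsup_eq (f g : ℕ → ℝ) {C : ℝ}
    (hf0 : ∀ k, 0 ≤ f k) (hfC : ∀ k, f k ≤ C)
    (hg0 : ∀ k, 0 ≤ g k) (hgC : ∀ k, g k ≤ C)
    (h : Tendsto (fun k => f k - g k) atTop (nhds 0)) :
    limsup f atTop = limsup g atTop := by
  refine le_antisymm (my_limsup_le f g hf0 hg0 hgC h) (my_limsup_le g f hg0 hf0 hfC ?_)
  have := h.neg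
  rw [neg_zero] at this
  simpa [neg_sub] using this

/-- The operator `Φ(x,z) = B(x,x)^{-1/2} B(x,z) B(z,z)^{-1/2}` on `B(H)`:
`w ↦ (1−xx*)^{-1/2}(1−xz*)(1−zz*)^{-1/2} · w · (1−z*z)^{-1/2}(1−z*x)(1−x*x)^{-1/2}`,
where square roots are taken via the continuous functional calculus. -/
noncomputable def Phi {H : Type*} [NormedAddCommGroup H] [InnerProductSpace ℂ H]
    [CompleteSpace H] (x z : H →L[ℂ] H) : (H →L[ℂ] H) →L[ℂ] (H →L[ℂ] H) :=
  ContinuousLinearMap.mulLeftRight ℂ (H →L[ℂ] H)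
    (Ring.inverse (CFC.sqrt (1 - x * star x)) * (1 - x * star z)
      * Ring.inverse (CFC.sqrt (1 - z * star z)))
    (Ring.inverse (CFC.sqrt (1 - star z * z)) * (1 - star z * x)
      * Ring.inverse (CFC.sqrt (1 - star x * x)))

set_option maxHeartbeats 1000000 in
set_option synthInstance.maxHeartbeats 400000 in
/-- Lemma 2.2 of the paper, for `B(H)`: if `(x_k)` is a sequence in the open unit ball
norm-converging to `x` with `‖x‖ < 1`, then
`limsup_k (1 − ‖z_k‖²)‖Φ(x_k, z_k)‖ = limsup_k (1 − ‖z_k‖²)‖Φ(x, z_k)‖`. -/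
theorem stmt14 {H : Type*} [NormedAddCommGroup H] [InnerProductSpace ℂ H] [CompleteSpace H]
    (z : ℕ → H →L[ℂ] H) (hz : ∀ k, ‖z k‖ < 1)
    (ξ : H →L[ℂ] H) (hξ : ‖ξ‖ ≤ 1) (hconv : Tendsto z atTop (nhds ξ))
    (x : ℕ → H →L[ℂ] H) (hx : ∀ k, ‖x k‖ < 1)
    (x' : H →L[ℂ] H) (hx' : ‖x'‖ < 1) (hxconv : Tendsto x atTop (nhds x')) :
    limsup (fun k => (1 - ‖z k‖ ^ 2) * ‖Phi (x k) (z k)‖) atTop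
      = limsup (fun k => (1 - ‖z k‖ ^ 2) * ‖Phi x' (z k)‖) atTop := by
  rcases subsingleton_or_nontrivial (H →L[ℂ] H) with hsub | hnt
  · have : ∀ k, Phi (x k) (z k) = Phi x' (z k) := fun k => Subsingleton.elim _ _
    simp only [this]
  · -- abbreviations
    set c : ℕ → ℝ := fun k => 1 - ‖z k‖ ^ 2 with hcdef
    have hc : ∀ k, 0 < c k := fun k => my_pos_c (hz k)
    set s : ℕ → ℝ := fun k => Real.sqrt (c k) with hsdef
    have hs : ∀ k, 0 < s k := fun k => Real.sqrt_pos.mpr (hc k)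
    have hss : ∀ k, s k * s k = c k := fun k => Real.mul_self_sqrt (hc k).le
    have hkey : ∀ k, c k * ((s k)⁻¹ * (s k)⁻¹) = 1 := by
      intro k
      rw [← hss k, ← mul_inv]
      exact mul_inv_cancel₀ (ne_of_gt (mul_pos (hs k) (hs k)))
    set P : ℕ → (H →L[ℂ] H) := fun k => Ring.inverse (CFC.sqrt (1 - x k * star (x k))) with hPdef
    set P' : (H →L[ℂ] H) := Ring.inverse (CFC.sqrt (1 - x' * star x')) with hP'def
    set Pt : ℕ → (H →L[ℂ] H) := fun k => Ring.inverse (CFC.sqrt (1 - star (x k) * x k)) with hPtdef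
    set Pt' : (H →L[ℂ] H) := Ring.inverse (CFC.sqrt (1 - star x' * x')) with hPt'def
    set Q : ℕ → (H →L[ℂ] H) := fun k => Ring.inverse (CFC.sqrt (1 - z k * star (z k))) with hQdef
    set Qt : ℕ → (H →L[ℂ] H) := fun k => Ring.inverse (CFC.sqrt (1 - star (z k) * z k)) with hQtdef
    have hQb : ∀ k, ‖Q k‖ ≤ (s k)⁻¹ := fun k => my_bound (z k) (hz k)
    have hQtb : ∀ k, ‖Qt k‖ ≤ (s k)⁻¹ := fun k => my_bound' (z k) (hz k)
    -- convergence of P and Pt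
    have hxstar : Tendsto (fun k => star (x k)) atTop (nhds (star x')) := hxconv.star
    have hb1 : Tendsto (fun k => (1 : H →L[ℂ] H) - x k * star (x k)) atTop
        (nhds (1 - x' * star x')) := tendsto_const_nhds.sub (hxconv.mul hxstar)
    have hb2 : Tendsto (fun k => (1 : H →L[ℂ] H) - star (x k) * x k) atTop
        (nhds (1 - star x' * x')) := tendsto_const_nhds.sub (hxstar.mul hxconv)
    have hsq1 := my_tendsto_sqrt _ _ (fun k => my_nonneg_one_sub (x k) (hx k))
      (my_nonneg_one_sub x' hx') hb1
    have hsq2 : Tendsto (fun k => CFC.sqrt (1 - star (x k) * x k)) atTop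
        (nhds (CFC.sqrt (1 - star x' * x'))) := by
      have h0 : ∀ w : H →L[ℂ] H, ‖w‖ < 1 → (0:H →L[ℂ] H) ≤ 1 - star w * w := by
        intro w hw
        have := my_nonneg_one_sub (star w) (by rwa [norm_star])
        rwa [star_star] at this
      exact my_tendsto_sqrt _ _ (fun k => h0 (x k) (hx k)) (h0 x' hx') hb2
    have hPconv : Tendsto P atTop (nhds P') := by
      obtain ⟨u, hu⟩ := my_isUnit x' hx'
      have : ContinuousAt Ring.inverse (CFC.sqrt (1 - x' * star x')) := by
        rw [← hu]; exact NormedRing.inverse_continuousAt u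
      exact (this.tendsto).comp hsq1
    have hPtconv : Tendsto Pt atTop (nhds Pt') := by
      have hiu : IsUnit (CFC.sqrt (1 - star x' * x')) := by
        have := my_isUnit (star x') (by rwa [norm_star])
        rwa [star_star] at this
      obtain ⟨u, hu⟩ := hiu
      have : ContinuousAt Ring.inverse (CFC.sqrt (1 - star x' * x')) := by
        rw [← hu]; exact NormedRing.inverse_continuousAt u
      exact (this.tendsto).comp hsq2
    -- a uniform bound C
    obtain ⟨C₁, hC₁⟩ : BddAbove (Set.range fun k => ‖P k‖) := hPconv.norm.bddAbove_range
    obtain ⟨C₂, hC₂⟩ : BddAbove (Set.range fun k => ‖Pt k‖) := hPtconv.norm.bddAbove_range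
    set C : ℝ := max (max C₁ C₂) (max (max ‖P'‖ ‖Pt'‖) 1) with hCdef
    have hC1 : (1:ℝ) ≤ C := le_max_of_le_right (le_max_right _ _)
    have hC0 : (0:ℝ) < C := lt_of_lt_of_le one_pos hC1
    have hPb : ∀ k, ‖P k‖ ≤ C := fun k =>
      le_max_of_le_left (le_max_of_le_left (hC₁ (Set.mem_range_self k)))
    have hPtb : ∀ k, ‖Pt k‖ ≤ C := fun k =>
      le_max_of_le_left (le_max_of_le_right (hC₂ (Set.mem_range_self k)))
    have hP'b : ‖P'‖ ≤ C := le_max_of_le_right (le_max_of_le_left (le_max_left _ _))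
    have hPt'b : ‖Pt'‖ ≤ C := le_max_of_le_right (le_max_of_le_left (le_max_right _ _))
    -- middle factors
    set u : ℕ → (H →L[ℂ] H) := fun k => 1 - x k * star (z k) with hudef
    set u' : ℕ → (H →L[ℂ] H) := fun k => 1 - x' * star (z k) with hu'def
    set v : ℕ → (H →L[ℂ] H) := fun k => 1 - star (z k) * x k with hvdef
    set v' : ℕ → (H →L[ℂ] H) := fun k => 1 - star (z k) * x' with hv'def
    have hub : ∀ k, ‖u k‖ ≤ 2 := fun k =>
      my_norm_one_sub_mul _ _ (hx k).le (by rw [norm_star]; exact (hz k).le)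
    have hu'b : ∀ k, ‖u' k‖ ≤ 2 := fun k =>
      my_norm_one_sub_mul _ _ hx'.le (by rw [norm_star]; exact (hz k).le)
    have hvb : ∀ k, ‖v k‖ ≤ 2 := fun k =>
      my_norm_one_sub_mul _ _ (by rw [norm_star]; exact (hz k).le) (hx k).le
    have hv'b : ∀ k, ‖v' k‖ ≤ 2 := fun k =>
      my_norm_one_sub_mul _ _ (by rw [norm_star]; exact (hz k).le) hx'.le
    -- the a and b factors
    set a : ℕ → (H →L[ℂ] H) := fun k => P k * u k * Q k with hadef
    set a' : ℕ → (H →L[ℂ] H) := fun k => P' * u' k * Q k with ha'def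
    set b : ℕ → (H →L[ℂ] H) := fun k => Qt k * v k * Pt k with hbdef
    set b' : ℕ → (H →L[ℂ] H) := fun k => Qt k * v' k * Pt' with hb'def
    have hPhi1 : ∀ k, Phi (x k) (z k) = ContinuousLinearMap.mulLeftRight ℂ _ (a k) (b k) :=
      fun k => rfl
    have hPhi2 : ∀ k, Phi x' (z k) = ContinuousLinearMap.mulLeftRight ℂ _ (a' k) (b' k) :=
      fun k => rfl
    -- norm bounds on factors
    have hab : ∀ k, ‖a k‖ ≤ C * 2 * (s k)⁻¹ := by
      intro k
      calc ‖a k‖ ≤ ‖P k * u k‖ * ‖Q k‖ := norm_mul_le _ _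
        _ ≤ (‖P k‖ * ‖u k‖) * ‖Q k‖ :=
            mul_le_mul_of_nonneg_right (norm_mul_le _ _) (norm_nonneg _)
        _ ≤ (C * 2) * (s k)⁻¹ := by
            apply mul_le_mul (mul_le_mul (hPb k) (hub k) (norm_nonneg _) hC0.le)
              (hQb k) (norm_nonneg _) (mul_nonneg hC0.le (by norm_num))
    have ha'b : ∀ k, ‖a' k‖ ≤ C * 2 * (s k)⁻¹ := by
      intro k
      calc ‖a' k‖ ≤ ‖P' * u' k‖ * ‖Q k‖ := norm_mul_le _ _
        _ ≤ (‖P'‖ * ‖u' k‖) * ‖Q k‖ :=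
            mul_le_mul_of_nonneg_right (norm_mul_le _ _) (norm_nonneg _)
        _ ≤ (C * 2) * (s k)⁻¹ := by
            apply mul_le_mul (mul_le_mul hP'b (hu'b k) (norm_nonneg _) hC0.le)
              (hQb k) (norm_nonneg _) (mul_nonneg hC0.le (by norm_num))
    have hbb : ∀ k, ‖b k‖ ≤ C * 2 * (s k)⁻¹ := by
      intro k
      calc ‖b k‖ ≤ ‖Qt k * v k‖ * ‖Pt k‖ := norm_mul_le _ _
        _ ≤ (‖Qt k‖ * ‖v k‖) * ‖Pt k‖ :=
            mul_le_mul_of_nonneg_right (norm_mul_le _ _) (norm_nonneg _)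
        _ ≤ ((s k)⁻¹ * 2) * C := by
            apply mul_le_mul
              (mul_le_mul (hQtb k) (hvb k) (norm_nonneg _) (inv_nonneg.mpr (hs k).le))
              (hPtb k) (norm_nonneg _)
              (mul_nonneg (inv_nonneg.mpr (hs k).le) (by norm_num))
        _ = C * 2 * (s k)⁻¹ := by ring
    have hb'b : ∀ k, ‖b' k‖ ≤ C * 2 * (s k)⁻¹ := by
      intro k
      calc ‖b' k‖ ≤ ‖Qt k * v' k‖ * ‖Pt'‖ := norm_mul_le _ _
        _ ≤ (‖Qt k‖ * ‖v' k‖) * ‖Pt'‖ :=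
            mul_le_mul_of_nonneg_right (norm_mul_le _ _) (norm_nonneg _)
        _ ≤ ((s k)⁻¹ * 2) * C := by
            apply mul_le_mul
              (mul_le_mul (hQtb k) (hv'b k) (norm_nonneg _) (inv_nonneg.mpr (hs k).le))
              hPt'b (norm_nonneg _)
              (mul_nonneg (inv_nonneg.mpr (hs k).le) (by norm_num))
        _ = C * 2 * (s k)⁻¹ := by ring
    -- difference bounds
    obtain ⟨E, hEdef⟩ : ∃ E : ℕ → ℝ, E = fun k => 2 * ‖P k - P'‖ + C * ‖x k - x'‖ := ⟨_, rfl⟩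
    obtain ⟨E', hE'def⟩ : ∃ E' : ℕ → ℝ, E' = fun k => 2 * ‖Pt k - Pt'‖ + C * ‖x k - x'‖ :=
      ⟨_, rfl⟩
    have hE0 : ∀ k, 0 ≤ E k := fun k => by
      simp only [hEdef]
      exact add_nonneg (mul_nonneg (by norm_num) (norm_nonneg _))
        (mul_nonneg hC0.le (norm_nonneg _))
    have hE'0 : ∀ k, 0 ≤ E' k := fun k => by
      simp only [hE'def]
      exact add_nonneg (mul_nonneg (by norm_num) (norm_nonneg _))
        (mul_nonneg hC0.le (norm_nonneg _))
    have hadiff : ∀ k, ‖a k - a' k‖ ≤ E k * (s k)⁻¹ := by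
      intro k
      have hdecomp : a k - a' k = ((P k - P') * u k + P' * (u k - u' k)) * Q k :=
        my_dec1 (P k) (u k) (Q k) P' (u' k)
      have huu' : u k - u' k = (x' - x k) * star (z k) := my_dec3 (x k) x' (star (z k))
      rw [hdecomp]
      calc ‖((P k - P') * u k + P' * (u k - u' k)) * Q k‖
          ≤ ‖(P k - P') * u k + P' * (u k - u' k)‖ * ‖Q k‖ := norm_mul_le _ _
        _ ≤ (‖(P k - P') * u k‖ + ‖P' * (u k - u' k)‖) * ‖Q k‖ :=
            mul_le_mul_of_nonneg_right (norm_add_le _ _) (norm_nonneg _)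
        _ ≤ (‖P k - P'‖ * ‖u k‖ + ‖P'‖ * ‖u k - u' k‖) * ‖Q k‖ :=
            mul_le_mul_of_nonneg_right (add_le_add (norm_mul_le _ _) (norm_mul_le _ _))
              (norm_nonneg _)
        _ ≤ E k * (s k)⁻¹ := by
            have h1 : ‖u k - u' k‖ ≤ ‖x k - x'‖ := by
              rw [huu']
              calc ‖(x' - x k) * star (z k)‖ ≤ ‖x' - x k‖ * ‖star (z k)‖ := norm_mul_le _ _
                _ ≤ ‖x' - x k‖ * 1 := by
                    apply mul_le_mul_of_nonneg_left _ (norm_nonneg _)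
                    rw [norm_star]; exact (hz k).le
                _ = ‖x k - x'‖ := by rw [mul_one, norm_sub_rev]
            have h2 : ‖P k - P'‖ * ‖u k‖ + ‖P'‖ * ‖u k - u' k‖ ≤ E k := by
              simp only [hEdef]
              have := mul_le_mul_of_nonneg_left (hub k) (norm_nonneg (P k - P'))
              have h3 := mul_le_mul hP'b h1 (norm_nonneg _) hC0.le
              nlinarith [norm_nonneg (P k - P'), norm_nonneg (u k)]
            apply mul_le_mul h2 (hQb k) (norm_nonneg _) (hE0 k)
    have hbdiff : ∀ k, ‖b k - b' k‖ ≤ E' k * (s k)⁻¹ := by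
      intro k
      have hdecomp : b k - b' k = Qt k * (v k * (Pt k - Pt') + (v k - v' k) * Pt') :=
        my_dec2 (Qt k) (v k) (Pt k) (v' k) Pt'
      have hvv' : v k - v' k = star (z k) * (x' - x k) := my_dec4 (star (z k)) (x k) x'
      rw [hdecomp]
      calc ‖Qt k * (v k * (Pt k - Pt') + (v k - v' k) * Pt')‖
          ≤ ‖Qt k‖ * ‖v k * (Pt k - Pt') + (v k - v' k) * Pt'‖ := norm_mul_le _ _
        _ ≤ ‖Qt k‖ * (‖v k * (Pt k - Pt')‖ + ‖(v k - v' k) * Pt'‖) :=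
            mul_le_mul_of_nonneg_left (norm_add_le _ _) (norm_nonneg _)
        _ ≤ ‖Qt k‖ * (‖v k‖ * ‖Pt k - Pt'‖ + ‖v k - v' k‖ * ‖Pt'‖) :=
            mul_le_mul_of_nonneg_left (add_le_add (norm_mul_le _ _) (norm_mul_le _ _))
              (norm_nonneg _)
        _ ≤ (s k)⁻¹ * E' k := by
            have h1 : ‖v k - v' k‖ ≤ ‖x k - x'‖ := by
              rw [hvv']
              calc ‖star (z k) * (x' - x k)‖ ≤ ‖star (z k)‖ * ‖x' - x k‖ := norm_mul_le _ _
                _ ≤ 1 * ‖x' - x k‖ := by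
                    apply mul_le_mul_of_nonneg_right _ (norm_nonneg _)
                    rw [norm_star]; exact (hz k).le
                _ = ‖x k - x'‖ := by rw [one_mul, norm_sub_rev]
            have h2 : ‖v k‖ * ‖Pt k - Pt'‖ + ‖v k - v' k‖ * ‖Pt'‖ ≤ E' k := by
              simp only [hE'def]
              have := mul_le_mul_of_nonneg_right (hvb k) (norm_nonneg (Pt k - Pt'))
              have h3 := mul_le_mul h1 hPt'b (norm_nonneg _) (norm_nonneg _)
              nlinarith [norm_nonneg (Pt k - Pt'), norm_nonneg (v k)]
            apply mul_le_mul (hQtb k) h2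
              (add_nonneg (mul_nonneg (norm_nonneg _) (norm_nonneg _))
                (mul_nonneg (norm_nonneg _) (norm_nonneg _)))
              (inv_nonneg.mpr (hs k).le)
        _ = E' k * (s k)⁻¹ := by ring
    clear_value P P' Pt Pt' Q Qt u u' v v' a a' b b' s
    clear hb1 hb2 hsq1 hsq2 hxstar hC₁ hC₂
    -- pointwise difference bound and boundedness
    obtain ⟨f, hfdef⟩ : ∃ f : ℕ → ℝ, f = fun k => c k * ‖Phi (x k) (z k)‖ := ⟨_, rfl⟩
    obtain ⟨g, hgdef⟩ : ∃ g : ℕ → ℝ, g = fun k => c k * ‖Phi x' (z k)‖ := ⟨_, rfl⟩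
    obtain ⟨D, hDdef⟩ : ∃ D : ℕ → ℝ, D = fun k => C * 2 * (E k + E' k) := ⟨_, rfl⟩
    have hfg : ∀ k, |f k - g k| ≤ D k := by
      intro k
      have hsplit : Phi (x k) (z k) - Phi x' (z k)
          = ContinuousLinearMap.mulLeftRight ℂ _ (a k - a' k) (b k)
            + ContinuousLinearMap.mulLeftRight ℂ _ (a' k) (b k - b' k) := by
        rw [hPhi1 k, hPhi2 k, map_sub, ContinuousLinearMap.sub_apply, map_sub]
        abel
      have hn : ‖Phi (x k) (z k) - Phi x' (z k)‖
          ≤ (E k * (s k)⁻¹) * (C * 2 * (s k)⁻¹) + (C * 2 * (s k)⁻¹) * (E' k * (s k)⁻¹) := by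
        rw [hsplit]
        calc ‖ContinuousLinearMap.mulLeftRight ℂ _ (a k - a' k) (b k)
              + ContinuousLinearMap.mulLeftRight ℂ _ (a' k) (b k - b' k)‖
            ≤ ‖ContinuousLinearMap.mulLeftRight ℂ _ (a k - a' k) (b k)‖
              + ‖ContinuousLinearMap.mulLeftRight ℂ _ (a' k) (b k - b' k)‖ := norm_add_le _ _
          _ ≤ ‖a k - a' k‖ * ‖b k‖ + ‖a' k‖ * ‖b k - b' k‖ :=
              add_le_add (ContinuousLinearMap.opNorm_mulLeftRight_apply_apply_le ℂ _ _ _)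
                (ContinuousLinearMap.opNorm_mulLeftRight_apply_apply_le ℂ _ _ _)
          _ ≤ (E k * (s k)⁻¹) * (C * 2 * (s k)⁻¹) + (C * 2 * (s k)⁻¹) * (E' k * (s k)⁻¹) :=
              add_le_add
                (mul_le_mul (hadiff k) (hbb k) (norm_nonneg _)
                  (mul_nonneg (hE0 k) (inv_nonneg.mpr (hs k).le)))
                (mul_le_mul (ha'b k) (hbdiff k) (norm_nonneg _)
                  (mul_nonneg (mul_nonneg hC0.le (by norm_num)) (inv_nonneg.mpr (hs k).le)))
      have habs : |f k - g k| ≤ c k * ‖Phi (x k) (z k) - Phi x' (z k)‖ := by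
        simp only [hfdef, hgdef]
        rw [← mul_sub, abs_mul, abs_of_pos (hc k)]
        exact mul_le_mul_of_nonneg_left (abs_norm_sub_norm_le _ _) (hc k).le
      calc |f k - g k| ≤ c k * ‖Phi (x k) (z k) - Phi x' (z k)‖ := habs
        _ ≤ c k * ((E k * (s k)⁻¹) * (C * 2 * (s k)⁻¹) + (C * 2 * (s k)⁻¹) * (E' k * (s k)⁻¹)) :=
            mul_le_mul_of_nonneg_left hn (hc k).le
        _ = (C * 2 * (E k + E' k)) * (c k * ((s k)⁻¹ * (s k)⁻¹)) := by ring
        _ = D k := by rw [hkey k, mul_one, hDdef]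
    have hf0 : ∀ k, 0 ≤ f k := fun k => by
      simp only [hfdef]; exact mul_nonneg (hc k).le (norm_nonneg _)
    have hg0 : ∀ k, 0 ≤ g k := fun k => by
      simp only [hgdef]; exact mul_nonneg (hc k).le (norm_nonneg _)
    have hfC : ∀ k, f k ≤ 4 * C ^ 2 := by
      intro k
      have h1 : ‖Phi (x k) (z k)‖ ≤ (C * 2 * (s k)⁻¹) * (C * 2 * (s k)⁻¹) := by
        rw [hPhi1 k]
        exact le_trans (ContinuousLinearMap.opNorm_mulLeftRight_apply_apply_le ℂ _ _ _)
          (mul_le_mul (hab k) (hbb k) (norm_nonneg _)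
            (mul_nonneg (mul_nonneg hC0.le (by norm_num)) (inv_nonneg.mpr (hs k).le)))
      calc f k = c k * ‖Phi (x k) (z k)‖ := by rw [hfdef]
        _ ≤ c k * ((C * 2 * (s k)⁻¹) * (C * 2 * (s k)⁻¹)) :=
            mul_le_mul_of_nonneg_left h1 (hc k).le
        _ = 4 * C ^ 2 * (c k * ((s k)⁻¹ * (s k)⁻¹)) := by ring
        _ = 4 * C ^ 2 := by rw [hkey k, mul_one]
    have hgC : ∀ k, g k ≤ 4 * C ^ 2 := by
      intro k
      have h1 : ‖Phi x' (z k)‖ ≤ (C * 2 * (s k)⁻¹) * (C * 2 * (s k)⁻¹) := by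
        rw [hPhi2 k]
        exact le_trans (ContinuousLinearMap.opNorm_mulLeftRight_apply_apply_le ℂ _ _ _)
          (mul_le_mul (ha'b k) (hb'b k) (norm_nonneg _)
            (mul_nonneg (mul_nonneg hC0.le (by norm_num)) (inv_nonneg.mpr (hs k).le)))
      calc g k = c k * ‖Phi x' (z k)‖ := by rw [hgdef]
        _ ≤ c k * ((C * 2 * (s k)⁻¹) * (C * 2 * (s k)⁻¹)) :=
            mul_le_mul_of_nonneg_left h1 (hc k).le
        _ = 4 * C ^ 2 * (c k * ((s k)⁻¹ * (s k)⁻¹)) := by ring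
        _ = 4 * C ^ 2 := by rw [hkey k, mul_one]
    -- D tends to zero
    have hD0 : Tendsto D atTop (nhds 0) := by
      have hnP : Tendsto (fun k => ‖P k - P'‖) atTop (nhds 0) :=
        tendsto_iff_norm_sub_tendsto_zero.mp hPconv
      have hnPt : Tendsto (fun k => ‖Pt k - Pt'‖) atTop (nhds 0) :=
        tendsto_iff_norm_sub_tendsto_zero.mp hPtconv
      have hnx : Tendsto (fun k => ‖x k - x'‖) atTop (nhds 0) :=
        tendsto_iff_norm_sub_tendsto_zero.mp hxconv
      have hE : Tendsto E atTop (nhds 0) := by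
        have h := (hnP.const_mul 2).add (hnx.const_mul C)
        rw [hEdef]
        simpa using h
      have hE' : Tendsto E' atTop (nhds 0) := by
        have h := (hnPt.const_mul 2).add (hnx.const_mul C)
        rw [hE'def]
        simpa using h
      have h := (hE.add hE').const_mul (C * 2)
      rw [hDdef]
      simpa using h
    have hdiff0 : Tendsto (fun k => f k - g k) atTop (nhds 0) := by
      apply squeeze_zero_norm (fun k => ?_) hD0
      rw [Real.norm_eq_abs]
      exact hfg k
    have hres := my_limsup_eq f g hf0 hfC hg0 hgC hdiff0
    rw [hfdef, hgdef] at hres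
    exact hres
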